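/- For every hypercube C that is the support of a B-spline of level ℓ−1 and degree p in ℝ^d, there exist exactly 2^d dyadic cells Q₁,…,Q_{2^d} of level ℓ such that C = N_{Q_i} for each i, and moreover C equals the union of the support extensions Q̂₁ ∪ … ∪ Q̂_{2^d}. -/

import Mathlib

noncomputable section

/-- The dyadic cell of level `ℓ` with index `m` in `ℝ^d`:
the hypercube `∏ᵢ [mᵢ/2^ℓ, (mᵢ+1)/2^ℓ]`. -/
def dyadicCell (d : ℕ) (ℓ : ℤ) (m : Fin d → ℤ) : Set (Fin d → ℝ) :=
  Set.univ.pi fun i => Set.Icc ((m i : ℝ) / 2 ^ ℓ) (((m i : ℝ) + 1) / 2 ^ ℓ)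

/-- The support of the tensor-product B-spline of degree `p`, level `ℓ`, index `k`:
the hypercube `∏ᵢ [kᵢ/2^ℓ, (kᵢ+p+1)/2^ℓ]`. -/
def bsupp (d p : ℕ) (ℓ : ℤ) (k : Fin d → ℤ) : Set (Fin d → ℝ) :=
  Set.univ.pi fun i => Set.Icc ((k i : ℝ) / 2 ^ ℓ) (((k i : ℝ) + p + 1) / 2 ^ ℓ)

/-- The support extension `Q̂` of the level-`ℓ` cell of index `m`:
the cube of `(2p+1)^d` level-`ℓ` cells centered at the cell. -/
def hatQ (d p : ℕ) (ℓ : ℤ) (m : Fin d → ℤ) : Set (Fin d → ℝ) :=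
  Set.univ.pi fun i => Set.Icc (((m i : ℝ) - p) / 2 ^ ℓ) (((m i : ℝ) + p + 1) / 2 ^ ℓ)

/-- The neighborhood `N_Q` of the level-`ℓ` cell of index `m`: the union of the
level-`(ℓ-1)` parents of all level-`ℓ` cells contained in the support extension `Q̂`. -/
def NQ (d p : ℕ) (ℓ : ℤ) (m : Fin d → ℤ) : Set (Fin d → ℝ) :=
  ⋃ m' ∈ {m' : Fin d → ℤ | dyadicCell d ℓ m' ⊆ hatQ d p ℓ m},
    dyadicCell d (ℓ - 1) fun i => Int.ediv (m' i) 2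

private lemma tpos (ℓ : ℤ) : (0:ℝ) < 2 ^ ℓ := by positivity

private lemma mem_Icc_div {ℓ : ℤ} {a b x : ℝ} :
    x ∈ Set.Icc (a / 2 ^ ℓ) (b / 2 ^ ℓ) ↔ a ≤ x * 2 ^ ℓ ∧ x * 2 ^ ℓ ≤ b := by
  rw [Set.mem_Icc, div_le_iff₀ (tpos ℓ), le_div_iff₀ (tpos ℓ)]

private lemma div_le_div_cast {ℓ : ℤ} {a b : ℝ} (h : a ≤ b) :
    a / 2 ^ ℓ ≤ b / 2 ^ ℓ := (div_le_div_iff_of_pos_right (tpos ℓ)).2 h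

private lemma cell_subset_iff (d p : ℕ) (ℓ : ℤ) (m' m : Fin d → ℤ) :
    dyadicCell d ℓ m' ⊆ hatQ d p ℓ m ↔ ∀ i, m i - p ≤ m' i ∧ m' i ≤ m i + p := by
  unfold dyadicCell hatQ
  rw [Set.univ_pi_subset_univ_pi_iff]
  have hne : ∀ i : Fin d,
      (Set.Icc ((m' i : ℝ) / 2 ^ ℓ) (((m' i : ℝ) + 1) / 2 ^ ℓ)).Nonempty := fun i =>
    Set.nonempty_Icc.2 (div_le_div_cast (by linarith))
  constructor
  · rintro (h | ⟨i, hi⟩)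
    · intro i
      have h2 := (Set.Icc_subset_Icc_iff (div_le_div_cast (by linarith))).1 (h i)
      have ha := (div_le_div_iff_of_pos_right (tpos ℓ)).1 h2.1
      have hb := (div_le_div_iff_of_pos_right (tpos ℓ)).1 h2.2
      constructor
      · exact_mod_cast ha
      · exact_mod_cast (by linarith : ((m' i : ℝ)) ≤ (m i : ℝ) + (p : ℝ))
    · exact absurd hi (hne i).ne_empty
  · intro h
    left
    intro i
    apply Set.Icc_subset_Icc <;> apply div_le_div_cast
    · have h1 := (h i).1
      have : ((m i - (p:ℤ) : ℤ) : ℝ) ≤ ((m' i : ℤ) : ℝ) := by exact_mod_cast h1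
      push_cast at this; linarith
    · have h2 := (h i).2
      have : ((m' i : ℤ) : ℝ) ≤ ((m i + (p:ℤ) : ℤ) : ℝ) := by exact_mod_cast h2
      push_cast at this; linarith

private lemma NQ_eq (d p : ℕ) (ℓ : ℤ) (m : Fin d → ℤ) :
    NQ d p ℓ m = Set.univ.pi fun i =>
      Set.Icc ((((m i - (p:ℤ)) / 2 : ℤ) : ℝ) / 2 ^ (ℓ - 1))
        (((((m i + (p:ℤ)) / 2 : ℤ) : ℝ) + 1) / 2 ^ (ℓ - 1)) := by
  have ediv2 : ∀ z : ℤ, Int.ediv z 2 = z / 2 := fun _ => rfl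
  ext x
  simp only [NQ, Set.mem_iUnion, Set.mem_setOf_eq, exists_prop]
  rw [Set.mem_univ_pi]
  constructor
  · rintro ⟨m', hsub, hx⟩
    rw [cell_subset_iff] at hsub
    simp only [dyadicCell, Set.mem_univ_pi] at hx
    intro i
    have hxi := hx i
    rw [mem_Icc_div] at hxi ⊢
    have h1 := (hsub i).1
    have h2 := (hsub i).2
    have ha : (m i - (p:ℤ)) / 2 ≤ m' i / 2 := by omega
    have hb : m' i / 2 ≤ (m i + (p:ℤ)) / 2 := by omega
    rw [ediv2] at hxi
    constructor
    · exact le_trans (by exact_mod_cast ha) hxi.1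
    · refine le_trans hxi.2 ?_
      have : ((m' i / 2 : ℤ) : ℝ) ≤ (((m i + (p:ℤ)) / 2 : ℤ) : ℝ) := by exact_mod_cast hb
      linarith
  · intro hx
    have key : ∀ i, ∃ y : ℤ, (m i - (p:ℤ) ≤ y ∧ y ≤ m i + (p:ℤ)) ∧
        ((Int.ediv y 2 : ℤ) : ℝ) ≤ x i * 2 ^ (ℓ - 1) ∧
        x i * 2 ^ (ℓ - 1) ≤ ((Int.ediv y 2 : ℤ) : ℝ) + 1 := by
      intro i
      have hxi := hx i
      rw [mem_Icc_div] at hxi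
      set X := x i * 2 ^ (ℓ - 1) with hX
      set f : ℤ := ⌊X⌋ with hf
      have hfA : (m i - (p:ℤ)) / 2 ≤ f := Int.le_floor.2 hxi.1
      have hfB : f ≤ (m i + (p:ℤ)) / 2 + 1 := by
        have h := Int.floor_le_floor (R := ℝ) hxi.2
        rwa [show ((((m i + (p:ℤ)) / 2 : ℤ) : ℝ) + 1) = (((m i + (p:ℤ)) / 2 + 1 : ℤ) : ℝ) by
          push_cast; ring, Int.floor_intCast] at h
      set t : ℤ := min f ((m i + (p:ℤ)) / 2) with ht
      have ht1 : (m i - (p:ℤ)) / 2 ≤ t := by omega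
      have ht2 : t ≤ (m i + (p:ℤ)) / 2 := by omega
      have hreal1 : (t : ℝ) ≤ X := by
        refine le_trans ?_ (Int.floor_le X)
        exact_mod_cast min_le_left _ _
      have hreal2 : X ≤ (t : ℝ) + 1 := by
        rcases le_or_gt f ((m i + (p:ℤ)) / 2) with h | h
        · have : t = f := by omega
          rw [this]
          exact le_of_lt (Int.lt_floor_add_one X)
        · have htb : t = (m i + (p:ℤ)) / 2 := by omega
          have hfb : f = (m i + (p:ℤ)) / 2 + 1 := by omega
          have : ((((m i + (p:ℤ)) / 2 : ℤ) : ℝ) + 1) = ((t : ℝ) + 1) := by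
            rw [htb]
          linarith [hxi.2, this]
      refine ⟨if m i - (p:ℤ) ≤ 2 * t then 2 * t else 2 * t + 1, ?_, ?_, ?_⟩
      · split_ifs with h <;> constructor <;> omega
      · have : Int.ediv (if m i - (p:ℤ) ≤ 2 * t then 2 * t else 2 * t + 1) 2 = t := by
          rw [ediv2]; split_ifs with h <;> omega
        rw [this]; exact hreal1
      · have : Int.ediv (if m i - (p:ℤ) ≤ 2 * t then 2 * t else 2 * t + 1) 2 = t := by
          rw [ediv2]; split_ifs with h <;> omega
        rw [this]; exact hreal2
    choose m' hm'1 hm'2 using key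
    refine ⟨m', ?_, ?_⟩
    · rw [cell_subset_iff]; exact hm'1
    · simp only [dyadicCell, Set.mem_univ_pi]
      intro i
      rw [mem_Icc_div]
      exact ⟨(hm'2 i).1, by have := (hm'2 i).2; linarith⟩

theorem core_cells (d p : ℕ) (hp : 1 ≤ p) (ℓ : ℤ) (hℓ : 1 ≤ ℓ) (k : Fin d → ℤ) :
    ∃ S : Finset (Fin d → ℤ),
      S.card = 2 ^ d ∧
      (∀ m ∈ S, NQ d p ℓ m = bsupp d p (ℓ - 1) k) ∧
      (∀ m : Fin d → ℤ, NQ d p ℓ m = bsupp d p (ℓ - 1) k → m ∈ S) ∧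
      bsupp d p (ℓ - 1) k = ⋃ m ∈ S, hatQ d p ℓ m := by
  classical
  set S : Finset (Fin d → ℤ) :=
    Fintype.piFinset fun i => ({2 * k i + p, 2 * k i + p + 1} : Finset ℤ) with hS
  have hmemS : ∀ m : Fin d → ℤ,
      m ∈ S ↔ ∀ i, m i = 2 * k i + p ∨ m i = 2 * k i + p + 1 := by
    intro m
    simp [hS, Fintype.mem_piFinset]
  have hpow : (2:ℝ) ^ ℓ = 2 ^ (ℓ - 1) * 2 := by
    rw [← zpow_add_one₀ (by norm_num : (2:ℝ) ≠ 0) (ℓ - 1), sub_add_cancel]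
  refine ⟨S, ?_, ?_, ?_, ?_⟩
  · rw [hS, Fintype.card_piFinset]
    have : ∀ i : Fin d, ({2 * k i + p, 2 * k i + p + 1} : Finset ℤ).card = 2 := by
      intro i
      rw [Finset.card_insert_of_notMem (by simp), Finset.card_singleton]
    simp [this]
  · intro m hm
    rw [hmemS] at hm
    rw [NQ_eq]
    unfold bsupp
    refine congrArg _ (funext fun i => ?_)
    have e1 : (m i - (p:ℤ)) / 2 = k i := by rcases hm i with h | h <;> omega
    have e2 : (m i + (p:ℤ)) / 2 = k i + p := by rcases hm i with h | h <;> omega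
    rw [e1, e2]
    congr 1
    push_cast
    ring
  · intro m hm
    rw [NQ_eq] at hm
    unfold bsupp at hm
    rw [hmemS]
    intro i
    have hne : (Set.univ.pi fun i => Set.Icc ((k i : ℝ) / 2 ^ (ℓ-1))
        (((k i : ℝ) + p + 1) / 2 ^ (ℓ-1))).Nonempty := by
      refine ⟨fun i => (k i : ℝ) / 2 ^ (ℓ-1), fun i _ => ?_⟩
      exact ⟨le_refl _, div_le_div_cast (by push_cast; linarith)⟩
    have hne' : (Set.univ.pi fun i =>
        Set.Icc ((((m i - (p:ℤ)) / 2 : ℤ) : ℝ) / 2 ^ (ℓ - 1))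
          (((((m i + (p:ℤ)) / 2 : ℤ) : ℝ) + 1) / 2 ^ (ℓ - 1))).Nonempty := hm ▸ hne
    have himg := congrArg (Set.image (fun f : Fin d → ℝ => f i)) hm
    rw [Set.eval_image_univ_pi hne', Set.eval_image_univ_pi hne] at himg
    have hIccne : (((m i - (p:ℤ)) / 2 : ℤ) : ℝ) / 2 ^ (ℓ - 1) ≤
        ((((m i + (p:ℤ)) / 2 : ℤ) : ℝ) + 1) / 2 ^ (ℓ - 1) := by
      apply div_le_div_cast
      have : ((m i - (p:ℤ)) / 2 : ℤ) ≤ ((m i + (p:ℤ)) / 2 : ℤ) + 1 := by omega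
      calc (((m i - (p:ℤ)) / 2 : ℤ) : ℝ) ≤ (((m i + (p:ℤ)) / 2 + 1 : ℤ) : ℝ) := by
            exact_mod_cast this
        _ = (((m i + (p:ℤ)) / 2 : ℤ) : ℝ) + 1 := by push_cast; ring
    have hIccne2 : (k i : ℝ) / 2 ^ (ℓ-1) ≤ ((k i : ℝ) + p + 1) / 2 ^ (ℓ-1) :=
      div_le_div_cast (by push_cast; linarith)
    have h1 : (((m i - (p:ℤ)) / 2 : ℤ) : ℝ) / 2 ^ (ℓ - 1) ∈
        Set.Icc ((k i : ℝ) / 2 ^ (ℓ-1)) (((k i : ℝ) + p + 1) / 2 ^ (ℓ-1)) :=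
      himg ▸ Set.left_mem_Icc.2 hIccne
    have h2 : (k i : ℝ) / 2 ^ (ℓ-1) ∈
        Set.Icc ((((m i - (p:ℤ)) / 2 : ℤ) : ℝ) / 2 ^ (ℓ - 1))
          (((((m i + (p:ℤ)) / 2 : ℤ) : ℝ) + 1) / 2 ^ (ℓ - 1)) :=
      himg.symm ▸ Set.left_mem_Icc.2 hIccne2
    have hle1 := h1.1
    have hle2 := h2.1
    have heq : (((m i - (p:ℤ)) / 2 : ℤ) : ℝ) = (k i : ℝ) := by
      have := (div_le_div_iff_of_pos_right (tpos (ℓ-1))).1 hle1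
      have := (div_le_div_iff_of_pos_right (tpos (ℓ-1))).1 hle2
      linarith
    have : ((m i - (p:ℤ)) / 2 : ℤ) = k i := by exact_mod_cast heq
    omega
  · ext x
    simp only [Set.mem_iUnion, exists_prop]
    constructor
    · intro hx
      set mfun : Fin d → ℤ := fun i =>
        if x i * 2 ^ (ℓ - 1) * 2 ≤ 2 * (k i : ℝ) + 2 * p + 1 then 2 * k i + p
        else 2 * k i + p + 1 with hmfun
      refine ⟨mfun, ?_, ?_⟩
      · rw [hmemS]
        intro i
        simp only [hmfun]
        split_ifs <;> simp
      · intro i _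
        have hxi := hx i (Set.mem_univ i)
        rw [mem_Icc_div] at hxi
        have hmul : x i * 2 ^ ℓ = x i * 2 ^ (ℓ - 1) * 2 := by rw [hpow]; ring
        rw [mem_Icc_div, hmul]
        simp only [hmfun]
        split_ifs with h
        · push_cast
          constructor <;> linarith
        · push_cast
          push_cast at h
          constructor <;> linarith
    · rintro ⟨m, hm, hx⟩
      rw [hmemS] at hm
      intro i _
      have hxi := hx i (Set.mem_univ i)
      rw [mem_Icc_div] at hxi ⊢
      have hmul : x i * 2 ^ ℓ = x i * 2 ^ (ℓ - 1) * 2 := by rw [hpow]; ring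
      rw [hmul] at hxi
      have hmcast : (m i : ℝ) = 2 * (k i : ℝ) + p ∨ (m i : ℝ) = 2 * (k i : ℝ) + p + 1 := by
        rcases hm i with h | h
        · left; rw [h]; push_cast; ring
        · right; rw [h]; push_cast; ring
      rcases hmcast with h | h <;> rw [h] at hxi <;> constructor <;> push_cast <;> linarith
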